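/- Let k ≥ 2 and l ≥ 3 be integers and n = 2^k. Then the Ducci coefficients satisfy a_{(l−1)·2^{k−1}, l·2^{k−2}+1} + a_{(l−1)·2^{k−1}, l·2^{k−2}−2^{k−1}+1} ≡ 0 (mod 2^l), where second indices are read modulo n. -/

import Mathlib

/-- The Ducci coefficients `a_{r,s}`, with second index read modulo `n`:
`a_{0,1} = 1`, `a_{0,s} = 0` for `s ≠ 1`, and `a_{r,s} = a_{r-1,s} + a_{r-1,s-1}`. -/
def ducciCoeff (n : ℕ) : ℕ → ZMod n → ℕ
  | 0, s => if s = 1 then 1 else 0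
  | r + 1, s => ducciCoeff n r s + ducciCoeff n r (s - 1)

/-- The element `1 + x` in the group algebra `ℤ[ZMod n]`. -/
private noncomputable def PD (n : ℕ) : AddMonoidAlgebra ℤ (ZMod n) := 1 + AddMonoidAlgebra.single 1 1

private lemma PD_pow_apply (n : ℕ) : ∀ (r : ℕ) (s : ZMod n),
    ((PD n ^ r : AddMonoidAlgebra ℤ (ZMod n))).coeff (s - 1) = (ducciCoeff n r s : ℤ)
  | 0, s => by
    rw [pow_zero, AddMonoidAlgebra.one_def]
    simp only [ducciCoeff, AddMonoidAlgebra.coeff_single, Finsupp.single_apply]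
    have hiff : ((0 : ZMod n) = s - 1) ↔ s = 1 :=
      ⟨fun h => sub_eq_zero.mp h.symm, fun h => (sub_eq_zero.mpr h).symm⟩
    simp only [hiff]
    split_ifs <;> simp
  | r + 1, s => by
    have h1 := PD_pow_apply n r s
    have h2 := PD_pow_apply n r (s - 1)
    have hmul : PD n ^ (r+1) = PD n ^ r + PD n ^ r * AddMonoidAlgebra.single 1 1 := by
      rw [pow_succ, PD]; ring
    rw [hmul]
    simp only [ducciCoeff]
    rw [AddMonoidAlgebra.coeff_add, Finsupp.add_apply, AddMonoidAlgebra.coeff_mul_single_apply, mul_one, ← sub_eq_add_neg, h1]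
    push_cast
    rw [← h2]

private lemma PD_pow_two_pow (n : ℕ) : ∀ j : ℕ, ∃ w : AddMonoidAlgebra ℤ (ZMod n),
    PD n ^ (2 ^ j) = 1 + AddMonoidAlgebra.single ((2 ^ j : ℕ) : ZMod n) 1 + 2 * w
  | 0 => ⟨0, by simp [PD]⟩
  | j + 1 => by
    obtain ⟨w, hw⟩ := PD_pow_two_pow n j
    set s : AddMonoidAlgebra ℤ (ZMod n) := AddMonoidAlgebra.single ((2 ^ j : ℕ) : ZMod n) 1 with hs
    refine ⟨s + 2 * w + 2 * (s * w) + 2 * (w * w), ?_⟩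
    have hsq : s * s = AddMonoidAlgebra.single ((2 ^ j * 2 : ℕ) : ZMod n) 1 := by
      rw [hs, AddMonoidAlgebra.single_mul_single, mul_one]
      congr 1
      push_cast
      ring
    have h2 : (2:ℕ) ^ (j+1) = 2 ^ j * 2 := by ring
    rw [h2, pow_mul, hw]
    linear_combination hsq

private lemma key_inv {R : Type*} [CommRing R] (v w : R) (hv4 : v ^ 4 = 1) :
    ∀ N : ℕ, ∃ f g : R,
      (1 + v ^ 2) * (1 + v + 2 * w) ^ (N + 1)
        = 2 ^ N * ((1 + v ^ 2) * ((1 + v) * (1 + f) + 2 * g))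
  | 0 => ⟨0, w, by ring⟩
  | N + 1 => by
    obtain ⟨f, g, h⟩ := key_inv v w hv4 N
    refine ⟨f + w + w * f + g, g * w, ?_⟩
    have hstep : (1 + v + 2 * w) ^ (N + 1 + 1) = (1 + v + 2 * w) ^ (N + 1) * (1 + v + 2 * w) := by
      ring
    rw [hstep, ← mul_assoc, h]
    linear_combination (2 ^ N * (1 + f)) * hv4

/-- For `n = 2^k`, `k ≥ 2`, `l ≥ 3`:
`a_{(l-1)·2^(k-1), l·2^(k-2)+1} + a_{(l-1)·2^(k-1), l·2^(k-2)-2^(k-1)+1} ≡ 0 (mod 2^l)`. -/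
theorem ducciCoeff_pair_sum' (k l : ℕ) (hk : 2 ≤ k) (hl : 3 ≤ l) :
    ducciCoeff (2 ^ k) ((l - 1) * 2 ^ (k - 1)) ((l * 2 ^ (k - 2) + 1 : ℕ) : ZMod (2 ^ k)) +
      ducciCoeff (2 ^ k) ((l - 1) * 2 ^ (k - 1))
        (((l * 2 ^ (k - 2) : ℕ) : ZMod (2 ^ k)) - ((2 ^ (k - 1) : ℕ) : ZMod (2 ^ k)) + 1)
      ≡ 0 [MOD 2 ^ l] := by
  -- basic exponent facts
  have e1 : (2:ℕ) ^ (k - 1) = 2 ^ (k - 2) * 2 := by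
    rw [← pow_succ]; congr 1; omega
  have e2 : (2:ℕ) ^ k = 2 ^ (k - 1) * 2 := by
    rw [← pow_succ]; congr 1; omega
  obtain ⟨w, hw⟩ := PD_pow_two_pow (2 ^ k) (k - 2)
  set v : AddMonoidAlgebra ℤ (ZMod (2 ^ k)) :=
    AddMonoidAlgebra.single ((2 ^ (k - 2) : ℕ) : ZMod (2 ^ k)) 1 with hv
  have hv2 : v ^ 2 = AddMonoidAlgebra.single ((2 ^ (k - 1) : ℕ) : ZMod (2 ^ k)) 1 := by
    rw [hv, sq, AddMonoidAlgebra.single_mul_single, mul_one]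
    congr 1
    have : (2:ℕ) ^ (k - 1) = 2 ^ (k - 2) + 2 ^ (k - 2) := by omega
    rw [this]; push_cast; ring
  have hv4 : v ^ 4 = 1 := by
    have h44 : v ^ 4 = (v ^ 2) * (v ^ 2) := by ring
    rw [h44, hv2, AddMonoidAlgebra.single_mul_single, mul_one]
    have hzero : ((2 ^ (k-1) : ℕ) : ZMod (2 ^ k)) + ((2 ^ (k-1) : ℕ) : ZMod (2 ^ k)) = 0 := by
      have : ((2 ^ (k-1) : ℕ) : ZMod (2 ^ k)) + ((2 ^ (k-1) : ℕ) : ZMod (2 ^ k))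
          = ((2 ^ (k-1) + 2 ^ (k-1) : ℕ) : ZMod (2 ^ k)) := by push_cast; ring
      rw [this]
      have : (2:ℕ) ^ (k-1) + 2 ^ (k-1) = 2 ^ k := by omega
      rw [this, ZMod.natCast_self]
    rw [hzero, AddMonoidAlgebra.one_def]
  obtain ⟨f, g, hfg⟩ := key_inv v w hv4 (2 * l - 3)
  have hexp : 2 * l - 3 + 1 = 2 * (l - 1) := by omega
  rw [hexp] at hfg
  have hpow : PD (2 ^ k) ^ ((l - 1) * 2 ^ (k - 1)) = (1 + v + 2 * w) ^ (2 * (l - 1)) := by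
    rw [← hw, ← pow_mul]
    congr 1
    rw [e1]; ring
  rw [← hpow] at hfg
  -- evaluate both sides of hfg at the coefficient c
  set c : ZMod (2 ^ k) := ((l * 2 ^ (k - 2) : ℕ) : ZMod (2 ^ k)) with hc
  set hh : ZMod (2 ^ k) := ((2 ^ (k - 1) : ℕ) : ZMod (2 ^ k)) with hhh
  set F : AddMonoidAlgebra ℤ (ZMod (2 ^ k)) := PD (2 ^ k) ^ ((l - 1) * 2 ^ (k - 1)) with hF
  set Z : AddMonoidAlgebra ℤ (ZMod (2 ^ k)) := (1 + v ^ 2) * ((1 + v) * (1 + f) + 2 * g) with hZ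
  have hsplit : (1 + v ^ 2) * F = F + AddMonoidAlgebra.single hh 1 * F := by
    rw [← hv2]; ring
  have hRHS : (2 : AddMonoidAlgebra ℤ (ZMod (2 ^ k))) ^ (2 * l - 3) * Z
      = ((2:ℤ) ^ (2 * l - 3)) • Z := by
    rw [zsmul_eq_mul]; push_cast; ring
  have hcoeff : F.coeff c + F.coeff (c - hh) = 2 ^ (2 * l - 3) * Z.coeff c := by
    have := congrArg (fun (t : AddMonoidAlgebra ℤ (ZMod (2 ^ k))) => t.coeff c) hfg
    rw [hsplit, hRHS] at this
    rw [AddMonoidAlgebra.coeff_add, Finsupp.add_apply, AddMonoidAlgebra.coeff_single_mul_apply, one_mul, neg_add_eq_sub,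
      AddMonoidAlgebra.coeff_smul, Finsupp.smul_apply, smul_eq_mul] at this
    exact this
  -- identify the coefficients with ducci coefficients
  have hA : F.coeff c = (ducciCoeff (2 ^ k) ((l - 1) * 2 ^ (k - 1))
      ((l * 2 ^ (k - 2) + 1 : ℕ) : ZMod (2 ^ k)) : ℤ) := by
    rw [← PD_pow_apply (2 ^ k) ((l - 1) * 2 ^ (k - 1)) ((l * 2 ^ (k - 2) + 1 : ℕ) : ZMod (2 ^ k)),
      ← hF]
    congr 1
    rw [hc]; push_cast; ring
  have hB : F.coeff (c - hh) = (ducciCoeff (2 ^ k) ((l - 1) * 2 ^ (k - 1))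
      (((l * 2 ^ (k - 2) : ℕ) : ZMod (2 ^ k)) - ((2 ^ (k - 1) : ℕ) : ZMod (2 ^ k)) + 1) : ℤ) := by
    rw [← PD_pow_apply (2 ^ k) ((l - 1) * 2 ^ (k - 1))
        (((l * 2 ^ (k - 2) : ℕ) : ZMod (2 ^ k)) - ((2 ^ (k - 1) : ℕ) : ZMod (2 ^ k)) + 1), ← hF]
    congr 1
    rw [hc, hhh]; ring
  rw [hA, hB] at hcoeff
  -- conclude
  set A : ℕ := ducciCoeff (2 ^ k) ((l - 1) * 2 ^ (k - 1))
      ((l * 2 ^ (k - 2) + 1 : ℕ) : ZMod (2 ^ k)) with hAdef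
  set B : ℕ := ducciCoeff (2 ^ k) ((l - 1) * 2 ^ (k - 1))
      (((l * 2 ^ (k - 2) : ℕ) : ZMod (2 ^ k)) - ((2 ^ (k - 1) : ℕ) : ZMod (2 ^ k)) + 1) with hBdef
  have hdvd : ((2:ℤ) ^ l) ∣ (A : ℤ) + (B : ℤ) := by
    rw [hcoeff]
    exact Dvd.dvd.mul_right (pow_dvd_pow 2 (by omega)) _
  have hdvd2 : ((2 ^ l : ℕ) : ℤ) ∣ ((A + B : ℕ) : ℤ) := by push_cast; exact hdvd
  exact (Nat.modEq_zero_iff_dvd).mpr (Int.natCast_dvd_natCast.mp hdvd2)
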